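/- Let a, b, c, d ∈ ℕ with c + d ≥ 1 and ab + cd ≥ 1, and let A = A(a,b,c,d) ∈ Θ⁺_Δ(2). For 0 ≤ k1 ≤ c and 0 ≤ k2 ≤ d let A_{(k1,k2)} := A(a+c+d−k1−k2, b+c+d−k1−k2, k1, k2), i.e. the matrix in Θ⁺_Δ(2) whose only nonzero entries in rows 1 and 2 are a+c+d−k1−k2 at (1,2), k1 at (1,3), b+c+d−k1−k2 at (2,3) and k2 at (2,4). Then: (i) the set of B ∈ Θ⁺_Δ(2) with B ⪯ A and with the same dimension vector as A is exactly { A_{(k1,k2)} : 0 ≤ k1 ≤ c, 0 ≤ k2 ≤ d }; and (ii) for 0 ≤ t1, k1 ≤ c and 0 ≤ t2, k2 ≤ d, A_{(t1,t2)} ⪯ A_{(k1,k2)} if and only if t1 ≤ k1 and t2 ≤ k2. -/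

import Mathlib

/-- The set `Θ⁺_Δ(n)` of ℕ-valued ℤ×ℤ matrices which are `n`-periodic along the
diagonal, supported on entries `(i,j)` with `i < j`, and with finitely many nonzero
entries in each row. -/
structure ThetaPlus (n : ℕ) where
  a : ℤ → ℤ → ℕ
  periodic : ∀ i j : ℤ, a i j = a (i + n) (j + n)
  upper : ∀ i j : ℤ, ¬i < j → a i j = 0
  rowFinite : ∀ i : ℤ, (Function.support (a i)).Finite

/-- `σ_{i,j}(B) = Σ_{s ≤ i, t ≥ j} b_{s,t}` (a finite sum). -/
noncomputable def sigmaIJ (B : ThetaPlus 2) (i j : ℤ) : ℕ :=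
  ∑ᶠ p : ℤ × ℤ, (if p.1 ≤ i ∧ j ≤ p.2 then B.a p.1 p.2 else 0)

/-- The order relation `B ⪯ A` on `Θ⁺_Δ(2)`. -/
def Prec (B A : ThetaPlus 2) : Prop := ∀ i j : ℤ, i < j → sigmaIJ B i j ≤ sigmaIJ A i j

/-- The `v`-th component of the dimension vector of `B ∈ Θ⁺_Δ(2)`, `v ∈ {1,2}`. -/
noncomputable def dimComp (B : ThetaPlus 2) (v : ℤ) : ℕ :=
  ∑ i ∈ ({1, 2} : Finset ℤ), ∑ᶠ j : ℤ,
    (if i < j then B.a i j * ((Finset.Icc i (j - 1)).filter fun s => s % 2 = v % 2).card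
     else 0)

/-- The entry function of the matrix `A(a,b,c,d)` in `Θ⁺_Δ(2)`, whose only nonzero
entries in rows 1 and 2 are `a` at `(1,2)`, `c` at `(1,3)`, `b` at `(2,3)` and `d`
at `(2,4)`. -/
def fourEntryFun (a b c d : ℕ) : ℤ → ℤ → ℕ := fun i j =>
  if i % 2 = 1 ∧ j = i + 1 then a
  else if i % 2 = 1 ∧ j = i + 2 then c
  else if i % 2 = 0 ∧ j = i + 1 then b
  else if i % 2 = 0 ∧ j = i + 2 then d
  else 0

/-- The matrix `A(a,b,c,d) ∈ Θ⁺_Δ(2)`. -/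
def fourEntry (a b c d : ℕ) : ThetaPlus 2 where
  a := fourEntryFun a b c d
  periodic := by
    intro i j
    simp only [fourEntryFun, Nat.cast_ofNat]
    split_ifs <;> omega
  upper := by
    intro i j hij
    simp only [fourEntryFun]
    split_ifs <;> omega
  rowFinite := by
    intro i
    apply Set.Finite.subset (Set.finite_Icc (i + 1) (i + 2))
    intro j hj
    simp only [Function.mem_support, fourEntryFun] at hj
    simp only [Set.mem_Icc]
    split_ifs at hj <;> omega

lemma ThetaPlus.ext' {n : ℕ} {C D : ThetaPlus n} (h : C.a = D.a) : C = D := by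
  cases C; cases D; cases h; rfl

lemma per2 (B : ThetaPlus 2) (i j n : ℤ) : B.a i j = B.a (i + 2*n) (j + 2*n) := by
  induction n using Int.induction_on with
  | zero => simp
  | succ k ih =>
      have h := B.periodic (i + 2*k) (j + 2*k)
      push_cast at h
      rw [ih, h]
      congr 1 <;> ring
  | pred k ih =>
      have h := B.periodic (i + 2*(-(k:ℤ)-1)) (j + 2*(-(k:ℤ)-1))
      push_cast at h
      rw [ih]
      rw [show i + 2*(-(k:ℤ)-1) + 2 = i + 2*(-(k:ℤ)) by ring,
          show j + 2*(-(k:ℤ)-1) + 2 = j + 2*(-(k:ℤ)) by ring] at h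
      rw [← h]

lemma bound (B : ThetaPlus 2) : ∃ M : ℤ, 0 < M ∧ ∀ s t : ℤ, s + M ≤ t → B.a s t = 0 := by
  obtain ⟨u1, hu1⟩ := (B.rowFinite 1).bddAbove
  obtain ⟨u2, hu2⟩ := (B.rowFinite 2).bddAbove
  refine ⟨max (max u1 u2 + 1) 1, by omega, ?_⟩
  intro s t hst
  rcases Int.emod_two_eq s with hp | hp
  · -- s even : s = 2 + 2*n
    obtain ⟨n, rfl⟩ : ∃ n : ℤ, s = 2 + 2*n := ⟨(s-2)/2, by omega⟩
    have := per2 B 2 (t - 2*n) n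
    rw [show t - 2*n + 2*n = t by ring] at this
    rw [← this]
    by_contra hne
    have : t - 2*n ≤ u2 := hu2 hne
    omega
  · obtain ⟨n, rfl⟩ : ∃ n : ℤ, s = 1 + 2*n := ⟨(s-1)/2, by omega⟩
    have := per2 B 1 (t - 2*n) n
    rw [show t - 2*n + 2*n = t by ring] at this
    rw [← this]
    by_contra hne
    have : t - 2*n ≤ u1 := hu1 hne
    omega

lemma sigma_eq_sum (B : ThetaPlus 2) (i j : ℤ) :
    ∃ S : Finset (ℤ × ℤ),
      (∀ s t : ℤ, s ≤ i → j ≤ t → B.a s t ≠ 0 → (s, t) ∈ S) ∧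
      sigmaIJ B i j = ∑ p ∈ S, (if p.1 ≤ i ∧ j ≤ p.2 then B.a p.1 p.2 else 0) := by
  obtain ⟨M, hM, hMz⟩ := bound B
  refine ⟨Finset.Icc (j - M) i ×ˢ Finset.Icc j (i + M), ?_, ?_⟩
  · intro s t hs ht hne
    have h1 : ¬ (s + M ≤ t) := fun h => hne (hMz s t h)
    simp only [Finset.mem_product, Finset.mem_Icc]
    omega
  · apply finsum_eq_sum_of_support_subset
    intro p hp
    simp only [Function.mem_support, ne_eq] at hp
    split_ifs at hp with h
    · have h1 : ¬ (p.1 + M ≤ p.2) := fun hh => hp (hMz _ _ hh)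
      simp only [Finset.coe_product, Set.mem_prod, Finset.mem_coe, Finset.mem_Icc]
      omega
    · exact absurd rfl hp

lemma entry_le_sigma (B : ThetaPlus 2) (i j : ℤ) : B.a i j ≤ sigmaIJ B i j := by
  by_cases h : B.a i j = 0
  · simp [h]
  obtain ⟨S, hS, hsum⟩ := sigma_eq_sum B i j
  rw [hsum]
  have hmem : (i, j) ∈ S := hS i j le_rfl le_rfl h
  calc B.a i j = (if (i ≤ i ∧ j ≤ j) then B.a i j else 0) := by simp
    _ ≤ _ := Finset.single_le_sum (f := fun p : ℤ × ℤ => if p.1 ≤ i ∧ j ≤ p.2 then B.a p.1 p.2 else 0)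
        (fun _ _ => Nat.zero_le _) hmem

lemma four_apply (a b c d : ℕ) (i j : ℤ) :
    (fourEntry a b c d).a i j =
      if i % 2 = 1 then (if j = i + 1 then a else if j = i + 2 then c else 0)
      else (if j = i + 1 then b else if j = i + 2 then d else 0) := by
  simp only [fourEntry, fourEntryFun]
  split_ifs <;> omega

lemma sigma_four (a b c d : ℕ) (i j : ℤ) (h : i < j) :
    sigmaIJ (fourEntry a b c d) i j =
      if i % 2 = 1 then (if j = i + 1 then a + c + d else if j = i + 2 then c else 0)
      else (if j = i + 1 then b + c + d else if j = i + 2 then d else 0) := by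
  have hsub : Function.support
      (fun p : ℤ × ℤ => if p.1 ≤ i ∧ j ≤ p.2 then (fourEntry a b c d).a p.1 p.2 else 0)
      ⊆ (({(i-1, i+1), (i, i+1), (i, i+2)} : Finset (ℤ × ℤ)) : Set (ℤ × ℤ)) := by
    intro p hp
    simp only [Function.mem_support, ne_eq] at hp
    split_ifs at hp with hc
    · rw [four_apply] at hp
      simp only [Finset.coe_insert, Set.mem_insert_iff, Finset.coe_singleton,
        Set.mem_singleton_iff, Prod.ext_iff]
      split_ifs at hp <;> omega
    · exact absurd rfl hp
  rw [sigmaIJ, finsum_eq_sum_of_support_subset _ hsub]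
  rw [Finset.sum_insert (by simp only [Finset.mem_insert, Finset.mem_singleton, Prod.ext_iff]; omega),
      Finset.sum_insert (by simp only [Finset.mem_singleton, Prod.ext_iff]; omega),
      Finset.sum_singleton]
  rcases Int.emod_two_eq i with hp | hp
  · have e1 : (fourEntry a b c d).a (i-1) (i+1) = c := by rw [four_apply]; split_ifs <;> omega
    have e2 : (fourEntry a b c d).a i (i+1) = b := by rw [four_apply]; split_ifs <;> omega
    have e3 : (fourEntry a b c d).a i (i+2) = d := by rw [four_apply]; split_ifs <;> omega
    rw [e1, e2, e3]
    split_ifs <;> omega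
  · have e1 : (fourEntry a b c d).a (i-1) (i+1) = d := by rw [four_apply]; split_ifs <;> omega
    have e2 : (fourEntry a b c d).a i (i+1) = a := by rw [four_apply]; split_ifs <;> omega
    have e3 : (fourEntry a b c d).a i (i+2) = c := by rw [four_apply]; split_ifs <;> omega
    rw [e1, e2, e3]
    split_ifs <;> omega

lemma prec_four_iff (a b c d a' b' c' d' : ℕ) :
    Prec (fourEntry a' b' c' d') (fourEntry a b c d) ↔
      (a' + c' + d' ≤ a + c + d ∧ b' + c' + d' ≤ b + c + d ∧ c' ≤ c ∧ d' ≤ d) := by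
  constructor
  · intro h
    have h1 := h 1 2 (by norm_num)
    have h2 := h 2 3 (by norm_num)
    have h3 := h 1 3 (by norm_num)
    have h4 := h 2 4 (by norm_num)
    rw [sigma_four _ _ _ _ _ _ (by norm_num), sigma_four _ _ _ _ _ _ (by norm_num)] at h1 h2 h3 h4
    norm_num at h1 h2 h3 h4
    exact ⟨h1, h2, h3, h4⟩
  · rintro ⟨g1, g2, g3, g4⟩ i j hij
    rw [sigma_four _ _ _ _ _ _ hij, sigma_four _ _ _ _ _ _ hij]
    split_ifs <;> omega

lemma dim_four (a b c d : ℕ) (v : ℤ) (hv : v = 1 ∨ v = 2) :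
    dimComp (fourEntry a b c d) v = (if v = 1 then a else b) + c + d := by
  have key : ∀ i : ℤ, Function.support (fun j : ℤ =>
      if i < j then (fourEntry a b c d).a i j *
        ((Finset.Icc i (j - 1)).filter fun s => s % 2 = v % 2).card else 0)
      ⊆ (({i+1, i+2} : Finset ℤ) : Set ℤ) := by
    intro i j hj
    simp only [Function.mem_support, ne_eq] at hj
    split_ifs at hj with hc
    · rw [four_apply] at hj
      simp only [Finset.coe_insert, Set.mem_insert_iff, Finset.coe_singleton,
        Set.mem_singleton_iff]
      split_ifs at hj <;> first | omega | simp at hj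
    · exact absurd rfl hj
  rw [dimComp]
  rw [Finset.sum_pair (by norm_num : (1:ℤ) ≠ 2)]
  rw [finsum_eq_sum_of_support_subset _ (key 1), finsum_eq_sum_of_support_subset _ (key 2)]
  norm_num [Finset.sum_pair]
  have c12 : (Finset.Icc (1:ℤ) 1) = {1} := Finset.Icc_self 1
  have c13 : (Finset.Icc (1:ℤ) 2) = {1, 2} := by
    ext x; simp only [Finset.mem_Icc, Finset.mem_insert, Finset.mem_singleton]; omega
  have c23 : (Finset.Icc (2:ℤ) 2) = {2} := Finset.Icc_self 2
  have c24 : (Finset.Icc (2:ℤ) 3) = {2, 3} := by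
    ext x; simp only [Finset.mem_Icc, Finset.mem_insert, Finset.mem_singleton]; omega
  rw [four_apply, four_apply, four_apply, four_apply]
  norm_num [c12, c13, c23, c24, Finset.filter_singleton, Finset.filter_insert]
  rcases hv with rfl | rfl <;> norm_num <;> omega

lemma entries_eq (B : ThetaPlus 2) (hz : ∀ s t : ℤ, s + 3 ≤ t → B.a s t = 0) :
    B = fourEntry (B.a 1 2) (B.a 2 3) (B.a 1 3) (B.a 2 4) := by
  apply ThetaPlus.ext'
  funext i j
  show B.a i j = (fourEntry (B.a 1 2) (B.a 2 3) (B.a 1 3) (B.a 2 4)).a i j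
  rw [four_apply]
  rcases (by omega : j ≤ i ∨ j = i + 1 ∨ j = i + 2 ∨ i + 3 ≤ j) with hj | hj | hj | hj
  · rw [B.upper i j (by omega)]
    split_ifs <;> omega
  · subst hj
    rcases Int.emod_two_eq i with hp | hp
    · obtain ⟨n, rfl⟩ : ∃ n : ℤ, i = 2 + 2*n := ⟨(i-2)/2, by omega⟩
      have h := per2 B 2 3 n
      rw [show (3:ℤ) + 2*n = 2 + 2*n + 1 by ring] at h
      rw [← h]
      split_ifs <;> omega
    · obtain ⟨n, rfl⟩ : ∃ n : ℤ, i = 1 + 2*n := ⟨(i-1)/2, by omega⟩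
      have h := per2 B 1 2 n
      rw [show (2:ℤ) + 2*n = 1 + 2*n + 1 by ring] at h
      rw [← h]
      split_ifs <;> omega
  · subst hj
    rcases Int.emod_two_eq i with hp | hp
    · obtain ⟨n, rfl⟩ : ∃ n : ℤ, i = 2 + 2*n := ⟨(i-2)/2, by omega⟩
      have h := per2 B 2 4 n
      rw [show (4:ℤ) + 2*n = 2 + 2*n + 2 by ring] at h
      rw [← h]
      split_ifs <;> omega
    · obtain ⟨n, rfl⟩ : ∃ n : ℤ, i = 1 + 2*n := ⟨(i-1)/2, by omega⟩
      have h := per2 B 1 3 n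
      rw [show (3:ℤ) + 2*n = 1 + 2*n + 2 by ring] at h
      rw [← h]
      split_ifs <;> omega
  · rw [hz i j hj]
    split_ifs <;> omega


theorem poset_ideal_structure (a b c d : ℕ) (h1 : 1 ≤ c + d) (h2 : 1 ≤ a * b + c * d) :
    ({B : ThetaPlus 2 | Prec B (fourEntry a b c d) ∧
        dimComp B 1 = dimComp (fourEntry a b c d) 1 ∧
        dimComp B 2 = dimComp (fourEntry a b c d) 2} =
      {B : ThetaPlus 2 | ∃ k1 k2 : ℕ, k1 ≤ c ∧ k2 ≤ d ∧
        B = fourEntry (a + c + d - k1 - k2) (b + c + d - k1 - k2) k1 k2}) ∧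
    (∀ t1 k1 t2 k2 : ℕ, t1 ≤ c → k1 ≤ c → t2 ≤ d → k2 ≤ d →
      (Prec (fourEntry (a + c + d - t1 - t2) (b + c + d - t1 - t2) t1 t2)
          (fourEntry (a + c + d - k1 - k2) (b + c + d - k1 - k2) k1 k2) ↔
        t1 ≤ k1 ∧ t2 ≤ k2)) := by
  constructor
  · ext B
    simp only [Set.mem_setOf_eq]
    constructor
    · rintro ⟨hprec, hd1, hd2⟩
      have hz : ∀ s t : ℤ, s + 3 ≤ t → B.a s t = 0 := by
        intro s t hst
        have hle : B.a s t ≤ sigmaIJ B s t := entry_le_sigma B s t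
        have hp := hprec s t (by omega)
        rw [sigma_four _ _ _ _ _ _ (by omega)] at hp
        split_ifs at hp <;> omega
      have hB := entries_eq B hz
      rw [hB] at hprec hd1 hd2 ⊢
      rw [prec_four_iff] at hprec
      rw [dim_four _ _ _ _ _ (Or.inl rfl), dim_four _ _ _ _ _ (Or.inl rfl)] at hd1
      rw [dim_four _ _ _ _ _ (Or.inr rfl), dim_four _ _ _ _ _ (Or.inr rfl)] at hd2
      norm_num at hd1 hd2
      refine ⟨B.a 1 3, B.a 2 4, hprec.2.2.1, hprec.2.2.2, ?_⟩
      have e1 : B.a 1 2 = a + c + d - B.a 1 3 - B.a 2 4 := by omega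
      have e2 : B.a 2 3 = b + c + d - B.a 1 3 - B.a 2 4 := by omega
      rw [e1, e2]
    · rintro ⟨k1, k2, hk1, hk2, rfl⟩
      refine ⟨?_, ?_, ?_⟩
      · rw [prec_four_iff]; omega
      · rw [dim_four _ _ _ _ _ (Or.inl rfl), dim_four _ _ _ _ _ (Or.inl rfl)]; norm_num; omega
      · rw [dim_four _ _ _ _ _ (Or.inr rfl), dim_four _ _ _ _ _ (Or.inr rfl)]; norm_num; omega
  · intro t1 k1 t2 k2 ht1 hk1 ht2 hk2
    rw [prec_four_iff]
    constructor
    · rintro ⟨-, -, h3, h4⟩; exact ⟨h3, h4⟩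
    · rintro ⟨h3, h4⟩; refine ⟨by omega, by omega, h3, h4⟩
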